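/- Let S be a nonempty finite set (support sentences), T a nonempty finite set of size N (relations), y : S → T a labeling, e : S → E an assignment of encodings in a real inner product space E, v : T → E prototype vectors, h : T → E graph-based relation embeddings, and K > 0 a real number. Suppose 0 < a ≤ b are real numbers with a ≤ exp(⟪e(s), v(r)⟫) ≤ b for all s ∈ S and r ∈ T. Then (1/K) · ∑_{s ∈ S} ⟪e(s), v(y(s))⟫ − (1/K) · ∑_{s ∈ S} log(∑_{r ∈ T} exp(⟪e(s), v(r)⟫)) − (1/2) · ∑_{r ∈ T} ‖v(r) − h(r)‖² ≥ (1/K) · ∑_{s ∈ S} ⟪e(s), v(y(s))⟫ − (1/K) · ∑_{s ∈ S} ((1/N) · ∑_{r ∈ T} ⟪e(s), v(r)⟫ + log N − log a − log b + 2 · log((a + b)/2)) − (1/2) · ∑_{r ∈ T} ‖v(r) − h(r)‖². -/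

import Mathlib

open Finset Real
open scoped RealInnerProductSpace

lemma key_log_bound {T : Type*} [Fintype T] [Nonempty T] (x : T → ℝ) (a b : ℝ)
    (ha : 0 < a) (hab : a ≤ b)
    (hb : ∀ r, a ≤ Real.exp (x r) ∧ Real.exp (x r) ≤ b) :
    Real.log (∑ r, Real.exp (x r)) ≤
      (1 / (Fintype.card T : ℝ)) * ∑ r, x r + Real.log (Fintype.card T)
        - Real.log a - Real.log b + 2 * Real.log ((a + b) / 2) := by
  set n : ℕ := Fintype.card T with hn
  have hn0 : 0 < n := Fintype.card_pos
  have hnR : (0:ℝ) < n := by exact_mod_cast hn0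
  set g : ℝ := (1 / (n:ℝ)) * ∑ r, x r with hg
  have hb0 : 0 < b := lt_of_lt_of_le ha hab
  -- pointwise Kantorovich
  have hpt : ∀ r : T, Real.exp (x r) + a * b * Real.exp (-(x r)) ≤ a + b := by
    intro r
    have ht : 0 < Real.exp (x r) := Real.exp_pos _
    have h1 := (hb r).1
    have h2 := (hb r).2
    have h3 : (0:ℝ) ≤ (Real.exp (x r) - a) * (b - Real.exp (x r)) :=
      mul_nonneg (by linarith) (by linarith)
    have hinv : Real.exp (-(x r)) = (Real.exp (x r))⁻¹ := by rw [Real.exp_neg]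
    rw [hinv, ← sub_nonneg]
    have heq : a + b - (Real.exp (x r) + a * b * (Real.exp (x r))⁻¹)
        = ((Real.exp (x r) - a) * (b - Real.exp (x r))) / Real.exp (x r) := by
      field_simp
      ring
    rw [heq]
    exact div_nonneg h3 ht.le
  set Sv : ℝ := ∑ r, Real.exp (x r) with hSv
  set Iv : ℝ := ∑ r, Real.exp (-(x r)) with hIv
  have hSvpos : 0 < Sv := Finset.sum_pos (fun r _ => Real.exp_pos _) Finset.univ_nonempty
  have hIvpos : 0 < Iv := Finset.sum_pos (fun r _ => Real.exp_pos _) Finset.univ_nonempty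
  have hsum : Sv + a * b * Iv ≤ n * (a + b) := by
    have := Finset.sum_le_sum (fun r (_ : r ∈ Finset.univ) => hpt r)
    simpa [hSv, hIv, Finset.sum_add_distrib, Finset.mul_sum, mul_add, hn] using this
  -- geometric mean ≤ arithmetic mean: n * exp(-g) ≤ Iv
  have hgm : (n:ℝ) * Real.exp (-g) ≤ Iv := by
    have hGA := Real.geom_mean_le_arith_mean_weighted Finset.univ
      (fun _ : T => 1 / (n:ℝ)) (fun r => Real.exp (-(x r)))
      (fun i _ => by positivity)
      (by simp [Finset.card_univ, ← hn])
      (fun i _ => (Real.exp_pos _).le)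
    have hprod : (∏ r : T, Real.exp (-(x r)) ^ ((1:ℝ) / n)) = Real.exp (-g) := by
      have : ∀ r : T, Real.exp (-(x r)) ^ ((1:ℝ) / n) = Real.exp (-(x r) * (1/n)) := by
        intro r; rw [Real.exp_mul]
      rw [Finset.prod_congr rfl (fun r _ => this r), ← Real.exp_sum]
      congr 1
      rw [hg, ← Finset.sum_mul]
      push_cast
      ring_nf
      rw [Finset.sum_neg_distrib]
      ring
    have h2 : Real.exp (-g) ≤ (1/(n:ℝ)) * Iv := by
      calc Real.exp (-g) = ∏ r : T, Real.exp (-(x r)) ^ ((1:ℝ) / n) := hprod.symm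
        _ ≤ ∑ i : T, (1/(n:ℝ)) * Real.exp (-(x i)) := hGA
        _ = (1/(n:ℝ)) * Iv := by rw [hIv, Finset.mul_sum]
    calc (n:ℝ) * Real.exp (-g) ≤ (n:ℝ) * ((1/(n:ℝ)) * Iv) := by
          exact mul_le_mul_of_nonneg_left h2 hnR.le
      _ = Iv := by field_simp
  -- Kantorovich: Sv * Iv ≤ n^2 (a+b)^2 / (4 a b)
  have hK1 : 4 * (a*b) * (Sv * Iv) ≤ ((n:ℝ) * (a+b))^2 := by
    nlinarith [sq_nonneg (Sv - a*b*Iv), sq_nonneg (Sv + a*b*Iv),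
      mul_nonneg (mul_nonneg ha.le hb0.le) hIvpos.le, hSvpos.le,
      mul_nonneg (sub_nonneg.2 hsum) (by positivity : (0:ℝ) ≤ Sv + a*b*Iv)]
  -- conclude Sv ≤ n * exp g * (a+b)^2/(4ab)
  have hexp : Real.exp (-g) * Real.exp g = 1 := by
    rw [← Real.exp_add]; simp
  have hSvle : Sv ≤ (n:ℝ) * Real.exp g * ((a+b)^2 / (4*(a*b))) := by
    have h4 : Sv * ((n:ℝ) * Real.exp (-g)) ≤ ((n:ℝ) * (a+b))^2 / (4*(a*b)) := by
      rw [le_div_iff₀ (by positivity)]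
      calc Sv * ((n:ℝ) * Real.exp (-g)) * (4*(a*b)) ≤ Sv * Iv * (4*(a*b)) := by
            apply mul_le_mul_of_nonneg_right _ (by positivity)
            exact mul_le_mul_of_nonneg_left hgm hSvpos.le
        _ = 4 * (a*b) * (Sv * Iv) := by ring
        _ ≤ ((n:ℝ) * (a+b))^2 := hK1
    have h5 := mul_le_mul_of_nonneg_right h4 (Real.exp_pos g).le
    calc Sv = Sv * ((n:ℝ) * Real.exp (-g)) * Real.exp g / n := by
          field_simp
          linear_combination (-1 : ℝ) * hexp
      _ ≤ (((n:ℝ) * (a+b))^2 / (4*(a*b))) * Real.exp g / n := by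
          gcongr
      _ = (n:ℝ) * Real.exp g * ((a+b)^2 / (4*(a*b))) := by
          field_simp
  have hlog : Real.log Sv ≤ Real.log ((n:ℝ) * Real.exp g * ((a+b)^2 / (4*(a*b)))) :=
    Real.log_le_log hSvpos hSvle
  have hrhs : Real.log ((n:ℝ) * Real.exp g * ((a+b)^2 / (4*(a*b))))
      = g + Real.log n - Real.log a - Real.log b + 2 * Real.log ((a+b)/2) := by
    have hab2 : (0:ℝ) < (a+b)/2 := by positivity
    rw [Real.log_mul (by positivity) (by positivity),
        Real.log_mul (by positivity) (Real.exp_ne_zero g), Real.log_exp,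
        Real.log_div (by positivity) (by positivity)]
    have h6 : (a+b)^2 = ((a+b)/2)^2 * 4 := by ring
    rw [h6, Real.log_mul (by positivity) (by norm_num), Real.log_pow,
        Real.log_mul (by positivity) (by positivity),
        Real.log_mul ha.ne' hb0.ne']
    ring
  rw [hrhs] at hlog
  exact hlog


/-- Appendix lower bound on the normalized log-posterior of the prototype vectors:
each log-partition term is replaced by the average logit plus the constant
`log N − log a − log b + 2 log((a+b)/2)` from Corollary 1. -/
theorem log_posterior_lower_bound {S T E : Type*} [Fintype S] [Fintype T]
    [Nonempty S] [Nonempty T] [NormedAddCommGroup E] [InnerProductSpace ℝ E]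
    (N : ℕ) (hN : Fintype.card T = N) (y : S → T) (e : S → E) (v : T → E) (h : T → E)
    (K : ℝ) (hK : 0 < K) (a b : ℝ) (ha : 0 < a) (hab : a ≤ b)
    (hbound : ∀ (s : S) (r : T), a ≤ Real.exp ⟪e s, v r⟫ ∧ Real.exp ⟪e s, v r⟫ ≤ b) :
    (1 / K) * ∑ s, ⟪e s, v (y s)⟫ -
        (1 / K) * ∑ s, Real.log (∑ r, Real.exp ⟪e s, v r⟫) -
        (1 / 2) * ∑ r, ‖v r - h r‖ ^ 2 ≥
      (1 / K) * ∑ s, ⟪e s, v (y s)⟫ -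
        (1 / K) * ∑ s, ((1 / (N : ℝ)) * ∑ r, ⟪e s, v r⟫ + Real.log N - Real.log a -
          Real.log b + 2 * Real.log ((a + b) / 2)) -
        (1 / 2) * ∑ r, ‖v r - h r‖ ^ 2 := by
  have hle : ∀ s : S, Real.log (∑ r, Real.exp ⟪e s, v r⟫) ≤
      (1 / (N : ℝ)) * ∑ r, ⟪e s, v r⟫ + Real.log N - Real.log a -
        Real.log b + 2 * Real.log ((a + b) / 2) := by
    intro s
    have h0 := key_log_bound (fun r => ⟪e s, v r⟫) a b ha hab (fun r => hbound s r)
    rw [hN] at h0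
    exact h0
  have hs : ∑ s, Real.log (∑ r, Real.exp ⟪e s, v r⟫) ≤
      ∑ s, ((1 / (N : ℝ)) * ∑ r, ⟪e s, v r⟫ + Real.log N - Real.log a -
        Real.log b + 2 * Real.log ((a + b) / 2)) :=
    Finset.sum_le_sum (fun s _ => hle s)
  have hmul := mul_le_mul_of_nonneg_left hs (by positivity : (0:ℝ) ≤ 1 / K)
  linarith
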